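/- arXiv:1809.07103 — 5 statements merged into one kernel-verified Lean document; each statement's English description precedes it below -/
import Mathlib

section
/- Let (β_{ν,j}) be real numbers for j ∈ ℕ and ν ∈ ℕ₀ with β_{0,j} = 1 for every j. Let 𝐍 be the set of sequences 𝛎 = (ν_j)_{j∈ℕ} in ℕ₀ with ∑_j ν_j < ∞ (equivalently, finite support), and for 𝛎 ∈ 𝐍 set β_𝛎 := ∏_{j∈ℕ} β_{ν_j,j} (a finite product since all but finitely many factors equal 1). Then ∑_{𝛎∈𝐍} β_𝛎 converges absolutely if and only if ∑_{j∈ℕ} ∑_{ν∈ℕ, ν≥1} |β_{ν,j}| < ∞, and in that case ∑_{𝛎∈𝐍} β_𝛎 = ∏_{j∈ℕ} (1 + ∑_{ν≥1} β_{ν,j}). -/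
set_option maxHeartbeats 1000000

open Finset Filter Topology

private lemma prod_eq_of_subset (γ : ℕ → ℕ → ℝ) (hγ0 : ∀ j, γ 0 j = 1) (ν : ℕ →₀ ℕ)
    {s : Finset ℕ} (h : ν.support ⊆ s) :
    ∏ j ∈ ν.support, γ (ν j) j = ∏ j ∈ s, γ (ν j) j :=
  Finset.prod_subset h fun j _ hj => by
    rw [Finsupp.notMem_support_iff.mp hj, hγ0]

private lemma split_lemma (γ : ℕ → ℕ → ℝ) (hγ0 : ∀ j, γ 0 j = 1) (j : ℕ) (n : ℕ)
    (ν : ℕ →₀ ℕ) (hj : j ∉ ν.support) :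
    ∏ i ∈ (Finsupp.single j n + ν).support, γ ((Finsupp.single j n + ν) i) i
      = γ n j * ∏ i ∈ ν.support, γ (ν i) i := by
  have hνj : ν j = 0 := Finsupp.notMem_support_iff.mp hj
  have hsub : (Finsupp.single j n + ν).support ⊆ insert j ν.support := by
    refine (Finsupp.support_add).trans (Finset.union_subset ?_ ?_)
    · exact Finsupp.support_single_subset.trans (by simp)
    · exact Finset.subset_insert _ _
  rw [prod_eq_of_subset γ hγ0 _ hsub, Finset.prod_insert hj]
  congr 1
  · rw [Finsupp.add_apply, Finsupp.single_eq_same, hνj, add_zero]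
  · refine Finset.prod_congr rfl fun i hi => ?_
    have hij : j ≠ i := fun h => hj (h ▸ hi)
    rw [Finsupp.add_apply, Finsupp.single_eq_of_ne hij.symm, zero_add]

/-- Equivalence used in the induction step. -/
private noncomputable def stepEquiv (s : Finset ℕ) (j : ℕ) (hj : j ∉ s) :
    ℕ × {ν : ℕ →₀ ℕ // ν.support ⊆ s} ≃ {ν : ℕ →₀ ℕ // ν.support ⊆ insert j s} where
  toFun p := ⟨Finsupp.single j p.1 + (p.2 : ℕ →₀ ℕ), by
    refine (Finsupp.support_add).trans ?_
    refine Finset.union_subset ?_ ?_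
    · exact Finsupp.support_single_subset.trans (by simp)
    · exact p.2.2.trans (Finset.subset_insert _ _)⟩
  invFun μ := ((μ : ℕ →₀ ℕ) j, ⟨(μ : ℕ →₀ ℕ).erase j, by
    rw [Finsupp.support_erase]
    intro i hi
    have h1 := Finset.mem_of_mem_erase hi
    have h2 := Finset.ne_of_mem_erase hi
    rcases Finset.mem_insert.mp (μ.2 h1) with h | h
    · exact absurd h h2
    · exact h⟩)
  left_inv p := by
    obtain ⟨n, ν, hν⟩ := p
    have hjν : j ∉ ν.support := fun h => hj (hν h)
    have hνj : ν j = 0 := Finsupp.notMem_support_iff.mp hjν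
    refine Prod.ext ?_ (Subtype.ext ?_)
    · simp [Finsupp.add_apply, hνj]
    · simp only
      rw [Finsupp.erase_add, Finsupp.erase_single, zero_add,
        Finsupp.erase_of_notMem_support hjν]
  right_inv μ := by
    refine Subtype.ext ?_
    exact Finsupp.single_add_erase j (μ : ℕ →₀ ℕ)

private lemma key (γ : ℕ → ℕ → ℝ) (hγ0 : ∀ j, γ 0 j = 1)
    (hs : ∀ j, Summable fun n => |γ n j|) (s : Finset ℕ) :
    Summable (fun ν : {ν : ℕ →₀ ℕ // ν.support ⊆ s} =>
      |∏ j ∈ (ν : ℕ →₀ ℕ).support, γ ((ν : ℕ →₀ ℕ) j) j|) ∧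
    HasSum (fun ν : {ν : ℕ →₀ ℕ // ν.support ⊆ s} =>
      ∏ j ∈ (ν : ℕ →₀ ℕ).support, γ ((ν : ℕ →₀ ℕ) j) j)
      (∏ j ∈ s, ∑' n, γ n j) := by
  classical
  induction s using Finset.induction_on with
  | empty =>
    have hz : ((0 : ℕ →₀ ℕ).support : Finset ℕ) ⊆ (∅ : Finset ℕ) := by simp
    have he : ∀ ν : {ν : ℕ →₀ ℕ // ν.support ⊆ (∅ : Finset ℕ)}, ν = ⟨0, hz⟩ := by
      rintro ⟨ν, hν⟩
      exact Subtype.ext (Finsupp.support_eq_empty.mp (Finset.subset_empty.mp hν))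
    have hgen : ∀ f : {ν : ℕ →₀ ℕ // ν.support ⊆ (∅ : Finset ℕ)} → ℝ,
        HasSum f (f ⟨0, hz⟩) := fun f =>
      hasSum_single _ (fun b hb => absurd (he b) hb)
    constructor
    · exact (hgen _).summable
    · convert hgen _ using 1; simp
  | @insert j s hj ih =>
    have hprod : ∀ p : ℕ × {ν : ℕ →₀ ℕ // ν.support ⊆ s},
        (∏ i ∈ ((stepEquiv s j hj p : ℕ →₀ ℕ)).support, γ ((stepEquiv s j hj p : ℕ →₀ ℕ) i) i)
          = γ p.1 j * ∏ i ∈ (p.2 : ℕ →₀ ℕ).support, γ ((p.2 : ℕ →₀ ℕ) i) i := by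
      rintro ⟨n, ν, hν⟩
      show ∏ i ∈ (Finsupp.single j n + ν).support, γ ((Finsupp.single j n + ν) i) i = _
      exact split_lemma γ hγ0 j n ν (fun h => hj (hν h))
    have hsummul : Summable fun p : ℕ × {ν : ℕ →₀ ℕ // ν.support ⊆ s} =>
        |γ p.1 j| * |∏ i ∈ (p.2 : ℕ →₀ ℕ).support, γ ((p.2 : ℕ →₀ ℕ) i) i| :=
      (hs j).mul_of_nonneg ih.1 (fun _ => abs_nonneg _) (fun _ => abs_nonneg _)
    constructor
    · rw [← (stepEquiv s j hj).summable_iff]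
      refine hsummul.congr fun p => ?_
      simp only [Function.comp_apply, hprod p, abs_mul]
    · rw [← (stepEquiv s j hj).hasSum_iff, Finset.prod_insert hj]
      have hmul : HasSum (fun p : ℕ × {ν : ℕ →₀ ℕ // ν.support ⊆ s} =>
          γ p.1 j * ∏ i ∈ (p.2 : ℕ →₀ ℕ).support, γ ((p.2 : ℕ →₀ ℕ) i) i)
          ((∑' n, γ n j) * ∏ i ∈ s, ∑' n, γ n i) := by
        refine HasSum.mul ((hs j).of_abs.hasSum) ih.2 ?_
        exact (hsummul.congr fun p => (abs_mul _ _).symm).of_abs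
      have hfun : ((fun ν : {ν : ℕ →₀ ℕ // ν.support ⊆ insert j s} =>
          ∏ i ∈ (ν : ℕ →₀ ℕ).support, γ ((ν : ℕ →₀ ℕ) i) i) ∘ (stepEquiv s j hj))
          = fun p => γ p.1 j * ∏ i ∈ (p.2 : ℕ →₀ ℕ).support, γ ((p.2 : ℕ →₀ ℕ) i) i :=
        funext fun p => by simp only [Function.comp_apply]; exact hprod p
      rw [hfun]
      exact hmul

private lemma sum_le_tsum_subtype' (f : (ℕ →₀ ℕ) → ℝ) (hf : ∀ ν, 0 ≤ f ν)
    (u : Finset (ℕ →₀ ℕ)) (s : Finset ℕ) (hu : ∀ ν ∈ u, ν.support ⊆ s)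
    (hsum : Summable fun ν : {ν : ℕ →₀ ℕ // ν.support ⊆ s} => f ν) :
    ∑ ν ∈ u, f ν ≤ ∑' ν : {ν : ℕ →₀ ℕ // ν.support ⊆ s}, f ν := by
  classical
  have h1 : ∑ ν ∈ u, f ν = ∑ ν ∈ u.subtype (fun ν => ν.support ⊆ s), f ν := by
    rw [Finset.sum_subtype_eq_sum_filter, Finset.filter_true_of_mem hu]
  rw [h1]
  exact Summable.sum_le_tsum _ (fun ν _ => hf ν) hsum

/-- For reals `β_{ν,j}` (`ν ∈ ℕ₀`, `j ∈ ℕ`) with `β_{0,j} = 1`, and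
`β_𝛎 := ∏_j β_{ν_j, j}` for finitely supported `𝛎 : ℕ → ℕ₀`, the family `(β_𝛎)` is
absolutely summable iff `∑_j ∑_{ν ≥ 1} |β_{ν,j}| < ∞`, in which case
`∑_𝛎 β_𝛎 = ∏_j (1 + ∑_{ν ≥ 1} β_{ν,j})`. -/
theorem stmt3 (β : ℕ → ℕ → ℝ) (hβ0 : ∀ j, β 0 j = 1) :
    ((Summable fun ν : ℕ →₀ ℕ => |∏ j ∈ ν.support, β (ν j) j|) ↔
      Summable fun p : ℕ × ℕ => |β (p.2 + 1) p.1|) ∧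
    ((Summable fun ν : ℕ →₀ ℕ => |∏ j ∈ ν.support, β (ν j) j|) →
      ∑' ν : ℕ →₀ ℕ, ∏ j ∈ ν.support, β (ν j) j =
        ∏' j : ℕ, (1 + ∑' ν : ℕ, β (ν + 1) j)) := by
  classical
  set F : (ℕ →₀ ℕ) → ℝ := fun ν => ∏ j ∈ ν.support, β (ν j) j with hF
  -- abbreviations
  set A : ℕ × ℕ → ℝ := fun p => |β (p.2 + 1) p.1| with hAdef
  -- forward direction
  have fwd : (Summable fun ν : ℕ →₀ ℕ => |F ν|) → Summable A := by
    intro h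
    have hinj : Function.Injective (fun p : ℕ × ℕ => Finsupp.single p.1 (p.2 + 1)) := by
      rintro ⟨a, b⟩ ⟨c, d⟩ hcd
      simp only at hcd
      rcases (Finsupp.single_eq_single_iff _ _ _ _).mp hcd with ⟨h1, h2⟩ | ⟨h1, _⟩
      · simp_all
      · exact absurd h1 (Nat.succ_ne_zero b)
    have := h.comp_injective hinj
    refine this.congr fun p => ?_
    simp only [Function.comp_apply, hF]
    rw [Finsupp.support_single_ne_zero _ (Nat.succ_ne_zero p.2), Finset.prod_singleton,
      Finsupp.single_eq_same]
  -- consequences of Summable A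
  have habs : Summable A → ∀ j, Summable fun n => |β n j| := by
    intro hA j
    have h1 : Summable fun n => |β (n + 1) j| := by
      have hinj : Function.Injective (fun n : ℕ => ((j, n) : ℕ × ℕ)) := by
        intro a b h; simpa using h
      exact hA.comp_injective hinj
    exact (summable_nat_add_iff 1).mp h1
  -- backward direction
  have bwd : Summable A → (Summable fun ν : ℕ →₀ ℕ => |F ν|) := by
    intro hA
    have habs' := habs hA
    -- the |β| version of key
    have hkey := key (fun n j => |β n j|) (fun j => by simp [hβ0])
      (fun j => (habs' j).congr fun n => (abs_abs _).symm)
    -- subtype summability and tsum value for |F|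
    have hsub : ∀ s : Finset ℕ,
        HasSum (fun ν : {ν : ℕ →₀ ℕ // ν.support ⊆ s} => |F (ν : ℕ →₀ ℕ)|)
          (∏ j ∈ s, ∑' n, |β n j|) := by
      intro s
      have h2 := (hkey s).2
      have heq : (fun ν : {ν : ℕ →₀ ℕ // ν.support ⊆ s} =>
          ∏ j ∈ (ν : ℕ →₀ ℕ).support, |β ((ν : ℕ →₀ ℕ) j) j|)
          = fun ν : {ν : ℕ →₀ ℕ // ν.support ⊆ s} => |F (ν : ℕ →₀ ℕ)| :=
        funext fun ν => (Finset.abs_prod _ _).symm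
      rwa [heq] at h2
    -- uniform bound
    refine summable_of_sum_le (c := Real.exp (∑' p, A p)) (fun ν => abs_nonneg _) fun u => ?_
    set s := u.sup Finsupp.support with hsdef
    have hus : ∀ ν ∈ u, ν.support ⊆ s := fun ν hν => Finset.le_sup hν
    have h1 : ∑ ν ∈ u, |F ν| ≤ ∏ j ∈ s, ∑' n, |β n j| := by
      rw [← (hsub s).tsum_eq]
      exact sum_le_tsum_subtype' _ (fun ν => abs_nonneg _) u s hus (hsub s).summable
    have hfib : ∀ j, Summable fun n => A (j, n) := fun j => by
      have hinj : Function.Injective (fun n : ℕ => ((j, n) : ℕ × ℕ)) := by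
        intro a b h; simpa using h
      exact hA.comp_injective hinj
    have haA : Summable fun j : ℕ => ∑' n, A (j, n) :=
      ((summable_prod_of_nonneg (fun p => abs_nonneg _)).mp hA).2
    have h2 : ∏ j ∈ s, ∑' n, |β n j| ≤ Real.exp (∑' p, A p) := by
      have step1 : ∀ j ∈ s, ∑' n, |β n j| ≤ Real.exp (∑' n, A (j, n)) := by
        intro j _
        rw [Summable.tsum_eq_zero_add (habs' j)]
        have h0 : |β 0 j| = 1 := by rw [hβ0]; exact abs_one
        rw [h0, add_comm]
        exact Real.add_one_le_exp _
      calc ∏ j ∈ s, ∑' n, |β n j| ≤ ∏ j ∈ s, Real.exp (∑' n, A (j, n)) :=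
            Finset.prod_le_prod (fun j _ => tsum_nonneg fun n => abs_nonneg _) step1
        _ = Real.exp (∑ j ∈ s, ∑' n, A (j, n)) := (Real.exp_sum s _).symm
        _ ≤ Real.exp (∑' p, A p) := by
            refine Real.exp_le_exp.mpr ?_
            rw [Summable.tsum_prod' hA hfib]
            exact Summable.sum_le_tsum s (fun j _ => tsum_nonneg fun n => abs_nonneg _) haA
    exact h1.trans h2
  refine ⟨⟨fwd, bwd⟩, ?_⟩
  -- the value
  intro hFa
  have hA : Summable A := fwd hFa
  have habs' := habs hA
  have hFs : Summable F := hFa.of_abs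
  have hkeyb := key β hβ0 habs'
  -- signed partial sums
  have hpart : ∀ s : Finset ℕ,
      ∑' ν : {ν : ℕ →₀ ℕ // ν.support ⊆ s}, F (ν : ℕ →₀ ℕ) = ∏ j ∈ s, (1 + ∑' n, β (n + 1) j) := by
    intro s
    rw [(hkeyb s).2.tsum_eq]
    refine Finset.prod_congr rfl fun j _ => ?_
    rw [Summable.tsum_eq_zero_add ((habs' j).of_abs), hβ0]
  set T : ℝ := ∑' ν, |F ν| with hT
  have habsF : HasSum (fun ν => |F ν|) T := hFa.hasSum
  -- convergence of partial tsums
  have htend : Tendsto (fun s : Finset ℕ => ∏ j ∈ s, (1 + ∑' n, β (n + 1) j)) atTop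
      (𝓝 (∑' ν, F ν)) := by
    rw [Metric.tendsto_atTop]
    intro ε hε
    obtain ⟨u₀, hu₀⟩ := (Metric.tendsto_atTop.mp habsF) (ε / 2) (by linarith)
    refine ⟨u₀.sup Finsupp.support, fun s hs => ?_⟩
    have hus : ∀ ν ∈ u₀, ν.support ⊆ s := fun ν hν =>
      (Finset.le_sup hν).trans hs
    -- lower bound for the abs partial tsum
    have hlow : T - ε / 2 ≤ ∑' ν : {ν : ℕ →₀ ℕ // ν.support ⊆ s}, |F (ν : ℕ →₀ ℕ)| := by
      have h1 : |∑ ν ∈ u₀, |F ν| - T| < ε / 2 := by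
        have := hu₀ u₀ le_rfl
        rwa [Real.dist_eq] at this
      have h2 : T - ε / 2 ≤ ∑ ν ∈ u₀, |F ν| := by
        have := abs_lt.mp h1
        linarith [this.1]
      refine h2.trans ?_
      exact sum_le_tsum_subtype' _ (fun ν => abs_nonneg _) u₀ s hus
        (hFa.subtype _)
    have hhigh : ∑' ν : {ν : ℕ →₀ ℕ // ν.support ⊆ s}, |F (ν : ℕ →₀ ℕ)| ≤ T :=
      Summable.tsum_subtype_le (fun ν => |F ν|) _ (fun ν => abs_nonneg _) hFa
    -- split the signed sum
    have hsplit : ∑' ν : {ν : ℕ →₀ ℕ | ν.support ⊆ s}, F (ν : ℕ →₀ ℕ)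
        + ∑' ν : ↥{ν : ℕ →₀ ℕ | ν.support ⊆ s}ᶜ, F (ν : ℕ →₀ ℕ) = ∑' ν, F ν :=
      Summable.tsum_add_tsum_compl (hFs.subtype _) (hFs.subtype _)
    have hsplitabs : ∑' ν : {ν : ℕ →₀ ℕ | ν.support ⊆ s}, |F (ν : ℕ →₀ ℕ)|
        + ∑' ν : ↥{ν : ℕ →₀ ℕ | ν.support ⊆ s}ᶜ, |F (ν : ℕ →₀ ℕ)| = T :=
      Summable.tsum_add_tsum_compl (hFa.subtype _) (hFa.subtype _)
    have hcomplabs : |∑' ν : ↥{ν : ℕ →₀ ℕ | ν.support ⊆ s}ᶜ, F (ν : ℕ →₀ ℕ)|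
        ≤ ∑' ν : ↥{ν : ℕ →₀ ℕ | ν.support ⊆ s}ᶜ, |F (ν : ℕ →₀ ℕ)| := by
      have := norm_tsum_le_tsum_norm (f := fun ν : ↥{ν : ℕ →₀ ℕ | ν.support ⊆ s}ᶜ =>
        F (ν : ℕ →₀ ℕ)) (hFa.subtype _)
      simpa [Real.norm_eq_abs] using this
    rw [Real.dist_eq, ← hpart s]
    have heq1 : ∑' ν : {ν : ℕ →₀ ℕ // ν.support ⊆ s}, F (ν : ℕ →₀ ℕ)
        = ∑' ν : {ν : ℕ →₀ ℕ | ν.support ⊆ s}, F (ν : ℕ →₀ ℕ) := rfl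
    have heq2 : ∑' ν : {ν : ℕ →₀ ℕ // ν.support ⊆ s}, |F (ν : ℕ →₀ ℕ)|
        = ∑' ν : {ν : ℕ →₀ ℕ | ν.support ⊆ s}, |F (ν : ℕ →₀ ℕ)| := rfl
    rw [heq1]
    have : |∑' ν : {ν : ℕ →₀ ℕ | ν.support ⊆ s}, F (ν : ℕ →₀ ℕ) - ∑' ν, F ν|
        = |∑' ν : ↥{ν : ℕ →₀ ℕ | ν.support ⊆ s}ᶜ, F (ν : ℕ →₀ ℕ)| := by
      rw [← hsplit]; ring_nf; rw [abs_neg]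
    rw [this]
    refine lt_of_le_of_lt (hcomplabs.trans ?_) (by linarith : ε / 2 < ε)
    have : ∑' ν : ↥{ν : ℕ →₀ ℕ | ν.support ⊆ s}ᶜ, |F (ν : ℕ →₀ ℕ)|
        = T - ∑' ν : {ν : ℕ →₀ ℕ | ν.support ⊆ s}, |F (ν : ℕ →₀ ℕ)| := by
      linarith [hsplitabs]
    rw [this, ← heq2]
    linarith [hlow]
  have hprod : HasProd (fun j => 1 + ∑' n, β (n + 1) j) (∑' ν, F ν) := htend
  exact hprod.tprod_eq.symm
end

section
/- Let (α_{ν,j})_{ν,j∈ℕ} be a family of positive reals satisfying: (C1) α_{ν,j} ≥ max(α_{ν,1}, α_{1,j}) for all ν, j; (C2) α_{1,1} > 1; and (C3) liminf_{ν,j→∞} ln(α_{ν,j})/(ln(ν)·ln(j)) > 0 (i.e., there exist ε > 0 and n ∈ ℕ with ln(α_{ν,j}) ≥ ε·ln(ν)·ln(j) for all ν, j ≥ n). Then for every τ > 0 and σ ≥ 0: ∑_{ν,j∈ℕ} α_{ν,j}^{-τ}·ν^σ < ∞ if and only if both ∑_{ν∈ℕ} α_{ν,1}^{-τ}·ν^σ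 < ∞ and ∑_{j∈ℕ} α_{1,j}^{-τ} < ∞. -/
set_option maxHeartbeats 1000000


/-- Under (C1) `α_{ν,j} ≥ max(α_{ν,1}, α_{1,j})`, (C2) `α_{1,1} > 1`, and
(C3) `liminf ln(α_{ν,j})/(ln ν · ln j) > 0`, for all `τ > 0`, `σ ≥ 0`:
`∑_{ν,j} α_{ν,j}^{-τ} ν^σ < ∞ ↔ (∑_ν α_{ν,1}^{-τ} ν^σ < ∞ ∧ ∑_j α_{1,j}^{-τ} < ∞)`. -/
theorem stmt5 (α : ℕ+ → ℕ+ → ℝ) (hpos : ∀ ν j, 0 < α ν j)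
    (hC1 : ∀ ν j, max (α ν 1) (α 1 j) ≤ α ν j)
    (hC2 : 1 < α 1 1)
    (hC3 : ∃ ε > (0 : ℝ), ∃ n : ℕ+, ∀ ν j : ℕ+, n ≤ ν → n ≤ j →
      ε * (Real.log ((ν : ℕ) : ℝ) * Real.log ((j : ℕ) : ℝ)) ≤ Real.log (α ν j))
    (τ σ : ℝ) (hτ : 0 < τ) (hσ : 0 ≤ σ) :
    (Summable fun p : ℕ+ × ℕ+ => α p.1 p.2 ^ (-τ) * ((p.1 : ℕ) : ℝ) ^ σ) ↔
      ((Summable fun ν : ℕ+ => α ν 1 ^ (-τ) * ((ν : ℕ) : ℝ) ^ σ) ∧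
        Summable fun j : ℕ+ => α 1 j ^ (-τ)) := by
  constructor
  · intro h
    constructor
    · have hinj : Function.Injective (fun ν : ℕ+ => ((ν, 1) : ℕ+ × ℕ+)) := by
        intro a b hab; simpa using hab
      have := h.comp_injective hinj
      exact this
    · have hinj : Function.Injective (fun j : ℕ+ => ((1, j) : ℕ+ × ℕ+)) := by
        intro a b hab; simpa using hab
      have := h.comp_injective hinj
      refine this.congr fun j => ?_
      show α 1 j ^ (-τ) * (((1 : ℕ+) : ℕ) : ℝ) ^ σ = α 1 j ^ (-τ)
      norm_num
  · rintro ⟨h1, h2⟩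
    obtain ⟨ε, hε, n, hC3'⟩ := hC3
    -- choose a large threshold N
    set t : ℝ := max 1 ((σ + 2) / (τ * ε / 2)) with ht
    obtain ⟨m, hm⟩ := exists_nat_gt (max (Real.exp t) (n : ℕ))
    set N : ℕ+ := ⟨m + 1, Nat.succ_pos m⟩ with hN
    have hNn : n ≤ N := by
      have ha : ((n : ℕ) : ℝ) < (m : ℝ) := lt_of_le_of_lt (le_max_right _ _) hm
      have hb : (n : ℕ) < m := by exact_mod_cast ha
      have hc : (n : ℕ) ≤ (N : ℕ) := hb.le.trans (Nat.le_succ m)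
      exact_mod_cast hc
    have hexpN : Real.exp t ≤ ((N : ℕ) : ℝ) := by
      have h1 : Real.exp t < (m : ℝ) := lt_of_le_of_lt (le_max_left _ _) hm
      have : (m : ℝ) ≤ ((N : ℕ) : ℝ) := by exact_mod_cast Nat.le_succ m
      linarith
    have hlogN : t ≤ Real.log ((N : ℕ) : ℝ) := by
      have := Real.log_le_log (Real.exp_pos t) hexpN
      rwa [Real.log_exp] at this
    have hLN1 : 1 ≤ Real.log ((N : ℕ) : ℝ) := le_trans (le_max_left _ _) hlogN
    have hτε : 0 < τ * ε / 2 := by positivity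
    have hKey : σ + 2 ≤ τ * ε / 2 * Real.log ((N : ℕ) : ℝ) := by
      have h1 : (σ + 2) / (τ * ε / 2) ≤ Real.log ((N : ℕ) : ℝ) :=
        le_trans (le_max_right _ _) hlogN
      calc σ + 2 = (σ + 2) / (τ * ε / 2) * (τ * ε / 2) := by field_simp
        _ ≤ Real.log ((N : ℕ) : ℝ) * (τ * ε / 2) := by
            apply mul_le_mul_of_nonneg_right h1 hτε.le
        _ = τ * ε / 2 * Real.log ((N : ℕ) : ℝ) := by ring
    -- the three dominating families
    set uA : ℕ+ → ℝ := fun ν => if ν < N then ((ν : ℕ) : ℝ) ^ σ else 0 with huA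
    set vB : ℕ+ → ℝ := fun j => if j < N then (1 : ℝ) else 0 with hvB
    have hsum_uA : Summable uA := by
      apply summable_of_ne_finset_zero (s := Finset.Iio N)
      intro b hb
      simp only [Finset.mem_Iio] at hb
      simp [huA, hb]
    have hsum_vB : Summable vB := by
      apply summable_of_ne_finset_zero (s := Finset.Iio N)
      intro b hb
      simp only [Finset.mem_Iio] at hb
      simp [hvB, hb]
    have hsum_pow : Summable fun ν : ℕ+ => ((ν : ℕ) : ℝ) ^ (-2 : ℝ) := by
      have hbase : Summable fun k : ℕ => (k : ℝ) ^ (-2 : ℝ) :=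
        Real.summable_nat_rpow.2 (by norm_num)
      exact hbase.comp_injective (fun a b hab => PNat.coe_injective hab)
    have hA : Summable fun p : ℕ+ × ℕ+ => uA p.1 * α 1 p.2 ^ (-τ) :=
      Summable.mul_of_nonneg hsum_uA h2
        (fun ν => by by_cases hc : ν < N <;> simp [huA, hc] <;> positivity)
        (fun j => Real.rpow_nonneg (hpos 1 j).le _)
    have hB : Summable fun p : ℕ+ × ℕ+ => (α p.1 1 ^ (-τ) * ((p.1 : ℕ) : ℝ) ^ σ) * vB p.2 :=
      Summable.mul_of_nonneg h1 hsum_vB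
        (fun ν => mul_nonneg (Real.rpow_nonneg (hpos ν 1).le _) (by positivity))
        (fun j => by by_cases hc : j < N <;> simp [hvB, hc])
    have hC : Summable fun p : ℕ+ × ℕ+ => ((p.1 : ℕ) : ℝ) ^ (-2 : ℝ) * ((p.2 : ℕ) : ℝ) ^ (-2 : ℝ) :=
      Summable.mul_of_nonneg hsum_pow hsum_pow
        (fun ν => Real.rpow_nonneg (by positivity) _)
        (fun j => Real.rpow_nonneg (by positivity) _)
    -- dominate
    refine Summable.of_nonneg_of_le
      (f := fun p : ℕ+ × ℕ+ => uA p.1 * α 1 p.2 ^ (-τ)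
        + (α p.1 1 ^ (-τ) * ((p.1 : ℕ) : ℝ) ^ σ) * vB p.2
        + ((p.1 : ℕ) : ℝ) ^ (-2 : ℝ) * ((p.2 : ℕ) : ℝ) ^ (-2 : ℝ))
      (fun p => mul_nonneg (Real.rpow_nonneg (hpos p.1 p.2).le _) (by positivity))
      ?_ ((hA.add hB).add hC)
    rintro ⟨ν, j⟩
    show α ν j ^ (-τ) * ((ν : ℕ) : ℝ) ^ σ ≤ uA ν * α 1 j ^ (-τ)
      + (α ν 1 ^ (-τ) * ((ν : ℕ) : ℝ) ^ σ) * vB j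
      + ((ν : ℕ) : ℝ) ^ (-2 : ℝ) * ((j : ℕ) : ℝ) ^ (-2 : ℝ)
    have hν0 : (0 : ℝ) < ((ν : ℕ) : ℝ) := by exact_mod_cast ν.pos
    have hj0 : (0 : ℝ) < ((j : ℕ) : ℝ) := by exact_mod_cast j.pos
    have hAnn : 0 ≤ uA ν * α 1 j ^ (-τ) :=
      mul_nonneg (by by_cases hc : ν < N <;> simp [huA, hc] <;> positivity)
        (Real.rpow_nonneg (hpos 1 j).le _)
    have hBnn : 0 ≤ (α ν 1 ^ (-τ) * ((ν : ℕ) : ℝ) ^ σ) * vB j :=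
      mul_nonneg (mul_nonneg (Real.rpow_nonneg (hpos ν 1).le _) (by positivity))
        (by by_cases hc : j < N <;> simp [hvB, hc])
    have hCnn : 0 ≤ ((ν : ℕ) : ℝ) ^ (-2 : ℝ) * ((j : ℕ) : ℝ) ^ (-2 : ℝ) :=
      mul_nonneg (Real.rpow_nonneg hν0.le _) (Real.rpow_nonneg hj0.le _)
    by_cases hν : ν < N
    · -- dominated by the A-term
      have hle : α ν j ^ (-τ) ≤ α 1 j ^ (-τ) :=
        Real.rpow_le_rpow_of_nonpos (hpos 1 j) (le_trans (le_max_right _ _) (hC1 ν j))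
          (by linarith)
      have : α ν j ^ (-τ) * ((ν : ℕ) : ℝ) ^ σ ≤ uA ν * α 1 j ^ (-τ) := by
        simp only [huA, if_pos hν]
        calc α ν j ^ (-τ) * ((ν : ℕ) : ℝ) ^ σ ≤ α 1 j ^ (-τ) * ((ν : ℕ) : ℝ) ^ σ := by
              apply mul_le_mul_of_nonneg_right hle (by positivity)
          _ = ((ν : ℕ) : ℝ) ^ σ * α 1 j ^ (-τ) := by ring
      linarith
    · by_cases hj : j < N
      · -- dominated by the B-term
        have hle : α ν j ^ (-τ) ≤ α ν 1 ^ (-τ) :=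
          Real.rpow_le_rpow_of_nonpos (hpos ν 1) (le_trans (le_max_left _ _) (hC1 ν j))
            (by linarith)
        have : α ν j ^ (-τ) * ((ν : ℕ) : ℝ) ^ σ ≤ (α ν 1 ^ (-τ) * ((ν : ℕ) : ℝ) ^ σ) * vB j := by
          simp only [hvB, if_pos hj, mul_one]
          apply mul_le_mul_of_nonneg_right hle (by positivity)
        linarith
      · -- the tail region : dominated by the C-term
        push_neg at hν hj
        have hνN : ((N : ℕ) : ℝ) ≤ ((ν : ℕ) : ℝ) := by exact_mod_cast hν
        have hjN : ((N : ℕ) : ℝ) ≤ ((j : ℕ) : ℝ) := by exact_mod_cast hj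
        have hN0 : (0 : ℝ) < ((N : ℕ) : ℝ) := by exact_mod_cast N.pos
        have hLν : Real.log ((N : ℕ) : ℝ) ≤ Real.log ((ν : ℕ) : ℝ) := Real.log_le_log hN0 hνN
        have hLj : Real.log ((N : ℕ) : ℝ) ≤ Real.log ((j : ℕ) : ℝ) := Real.log_le_log hN0 hjN
        have hlog : ε * (Real.log ((ν : ℕ) : ℝ) * Real.log ((j : ℕ) : ℝ)) ≤ Real.log (α ν j) :=
          hC3' ν j (le_trans hNn hν) (le_trans hNn hj)
        have hmain : α ν j ^ (-τ) * ((ν : ℕ) : ℝ) ^ σ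
            ≤ ((ν : ℕ) : ℝ) ^ (-2 : ℝ) * ((j : ℕ) : ℝ) ^ (-2 : ℝ) := by
          rw [Real.rpow_def_of_pos (hpos ν j), Real.rpow_def_of_pos hν0,
            Real.rpow_def_of_pos hν0, Real.rpow_def_of_pos hj0, ← Real.exp_add, ← Real.exp_add,
            Real.exp_le_exp]
          set Lν := Real.log ((ν : ℕ) : ℝ)
          set Lj := Real.log ((j : ℕ) : ℝ)
          set LN := Real.log ((N : ℕ) : ℝ)
          have h1 : Real.log (α ν j) * (-τ) ≤ -(τ * (ε * (Lν * Lj))) := by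
            have := mul_le_mul_of_nonneg_left hlog hτ.le
            linarith
          have hLν0 : (0 : ℝ) ≤ Lν := by linarith
          have hLj0 : (0 : ℝ) ≤ Lj := by linarith
          have e1 : (σ + 2) * Lν ≤ τ * ε / 2 * LN * Lν := mul_le_mul_of_nonneg_right hKey hLν0
          have e2 : (σ + 2) * Lj ≤ τ * ε / 2 * LN * Lj := mul_le_mul_of_nonneg_right hKey hLj0
          have e3 : τ * ε / 2 * Lν * LN ≤ τ * ε / 2 * Lν * Lj :=
            mul_le_mul_of_nonneg_left hLj (mul_nonneg hτε.le hLν0)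
          have e4 : τ * ε / 2 * Lj * LN ≤ τ * ε / 2 * Lj * Lν :=
            mul_le_mul_of_nonneg_left hLν (mul_nonneg hτε.le hLj0)
          have h2 : (σ + 2) * Lν + 2 * Lj ≤ τ * ε * (Lν * Lj) := by
            have hσLj : 0 ≤ σ * Lj := mul_nonneg hσ hLj0
            linarith
          linarith
        linarith
end

section
/- Let a_ν ≥ a_1 > 1 with a_ν ≍ ν, let (r_j)_{j∈ℕ} satisfy 0 < r_1 ≤ r_j for all j, set ρ := liminf_{j→∞} r_j/ln(j), and let σ ≥ 0. If r_1 > σ + 1 and ρ > 1/ln(a_1), then ∑_{ν,j∈ℕ} a_ν^{-r_j}·ν^σ < ∞. -/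
open Filter Real

/-- Summability of `ν ↦ ν^p` over `ℕ+` for `p < -1`. -/
lemma pnat_summable_rpow {p : ℝ} (hp : p < -1) :
    Summable (fun ν : ℕ+ => ((ν : ℕ) : ℝ) ^ p) := by
  have h : Summable (fun n : ℕ => (n : ℝ) ^ p) := Real.summable_nat_rpow.mpr hp
  exact h.comp_injective (fun x y hxy => PNat.coe_injective hxy)

set_option maxHeartbeats 1000000 in
/-- If `a_ν ≥ a_1 > 1` with `a_ν ≍ ν`, `0 < r_1 ≤ r_j`, `σ ≥ 0`, `r_1 > σ + 1`,
and `ρ := liminf_j r_j / ln j > 1 / ln a_1`, then `∑_{ν,j} a_ν^{-r_j} ν^σ < ∞`. -/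
theorem stmt7 (a : ℕ+ → ℝ) (ha1 : 1 < a 1) (hmin : ∀ ν, a 1 ≤ a ν)
    (c C : ℝ) (hc : 0 < c) (hcC : c ≤ C)
    (hlow : ∀ ν : ℕ+, c * ((ν : ℕ) : ℝ) ≤ a ν)
    (hup : ∀ ν : ℕ+, a ν ≤ C * ((ν : ℕ) : ℝ))
    (r : ℕ+ → ℝ) (hr1 : 0 < r 1) (hr : ∀ j, r 1 ≤ r j)
    (σ : ℝ) (hσ : 0 ≤ σ) (hrσ : σ + 1 < r 1)
    (hρ : ((1 / Real.log (a 1) : ℝ) : EReal) <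
      Filter.atTop.liminf fun j : ℕ+ => ((r j / Real.log ((j : ℕ) : ℝ) : ℝ) : EReal)) :
    Summable fun p : ℕ+ × ℕ+ => a p.1 ^ (-(r p.2)) * ((p.1 : ℕ) : ℝ) ^ σ := by
  have ha0 : (0 : ℝ) < a 1 := lt_trans one_pos ha1
  have hla : 0 < Real.log (a 1) := Real.log_pos ha1
  -- pick an intermediate real t with 1/log a1 < t < liminf
  obtain ⟨t, ht1, ht2⟩ := EReal.exists_between_coe_real hρ
  rw [EReal.coe_lt_coe_iff] at ht1
  have ht0 : 0 < t := lt_trans (by positivity) ht1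
  have hs1 : 1 < t * Real.log (a 1) := by
    rw [div_lt_iff₀ hla] at ht1; linarith
  -- eventually t < r j / log j
  have hev : ∀ᶠ j : ℕ+ in atTop,
      ((t : ℝ) : EReal) < ((r j / Real.log ((j : ℕ) : ℝ) : ℝ) : EReal) :=
    eventually_lt_of_lt_liminf ht2
  -- summability of j ↦ a1 ^ (-(r j))
  have hH : Summable (fun j : ℕ+ => a 1 ^ (-(r j))) := by
    apply Summable.of_norm_bounded_eventually (g := fun j : ℕ+ => ((j : ℕ) : ℝ) ^ (-(t * Real.log (a 1))))
      (pnat_summable_rpow (by linarith))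
    have hev2 : ∀ᶠ j : ℕ+ in atTop,
        ‖a 1 ^ (-(r j))‖ ≤ ((j : ℕ) : ℝ) ^ (-(t * Real.log (a 1))) := by
      filter_upwards [hev, eventually_ge_atTop (2 : ℕ+)] with j hj hj2
      rw [EReal.coe_lt_coe_iff] at hj
      have hjR : (2 : ℝ) ≤ ((j : ℕ) : ℝ) := by
        have : (2 : ℕ) ≤ (j : ℕ) := hj2
        exact_mod_cast this
      have hjpos : (0 : ℝ) < ((j : ℕ) : ℝ) := by linarith
      have hlj : 0 < Real.log ((j : ℕ) : ℝ) := Real.log_pos (by linarith)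
      have hrj : t * Real.log ((j : ℕ) : ℝ) < r j := by
        rw [lt_div_iff₀ hlj] at hj; linarith
      rw [Real.norm_eq_abs, abs_of_nonneg (Real.rpow_nonneg ha0.le _)]
      rw [Real.rpow_def_of_pos ha0, Real.rpow_def_of_pos hjpos]
      apply Real.exp_le_exp.mpr
      have : t * Real.log ((j : ℕ) : ℝ) * Real.log (a 1) ≤ r j * Real.log (a 1) :=
        mul_le_mul_of_nonneg_right hrj.le hla.le
      nlinarith
    -- upgrade atTop eventual bound to cofinite
    obtain ⟨N, hN⟩ := eventually_atTop.mp hev2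
    apply Filter.eventually_cofinite.mpr
    apply Set.Finite.subset (Set.Finite.preimage (f := fun j : ℕ+ => (j : ℕ))
      (Set.injOn_of_injective (fun x y hxy => PNat.coe_injective hxy))
      (Set.finite_Iio (N : ℕ)))
    intro j hj
    simp only [Set.mem_preimage, Set.mem_Iio]
    by_contra hcon
    exact hj (hN j (by exact_mod_cast not_lt.mp hcon))
  -- summability of ν ↦ ν ^ (σ - r 1)
  have hG : Summable (fun ν : ℕ+ => ((ν : ℕ) : ℝ) ^ (σ - r 1)) :=
    pnat_summable_rpow (by linarith)
  -- combine
  have hGH : Summable (fun p : ℕ+ × ℕ+ =>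
      (c ^ (-(r 1)) * ((p.1 : ℕ) : ℝ) ^ (σ - r 1)) * (a 1 ^ (r 1) * a 1 ^ (-(r p.2)))) :=
    Summable.mul_of_nonneg (hG.mul_left _) (hH.mul_left _)
      (fun ν => mul_nonneg (Real.rpow_nonneg hc.le _) (Real.rpow_nonneg (by positivity) _))
      (fun j => mul_nonneg (Real.rpow_nonneg ha0.le _) (Real.rpow_nonneg ha0.le _))
  apply Summable.of_nonneg_of_le _ _ hGH
  · intro p
    exact mul_nonneg (Real.rpow_nonneg (lt_of_lt_of_le ha0 (hmin p.1)).le _)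
      (Real.rpow_nonneg (by positivity) _)
  · rintro ⟨ν, j⟩
    have hν1 : (1 : ℝ) ≤ ((ν : ℕ) : ℝ) := by exact_mod_cast ν.one_le
    have hνpos : (0 : ℝ) < ((ν : ℕ) : ℝ) := by linarith
    have haν : (0 : ℝ) < a ν := lt_of_lt_of_le ha0 (hmin ν)
    have hcν : (0 : ℝ) < c * ((ν : ℕ) : ℝ) := by positivity
    -- a ν ^ (-(r j)) = a ν ^ (-(r 1)) * a ν ^ (-(r j - r 1))
    have e1 : a ν ^ (-(r j)) = a ν ^ (-(r 1)) * a ν ^ (-(r j - r 1)) := by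
      rw [← Real.rpow_add haν]; ring_nf
    have i1 : a ν ^ (-(r j - r 1)) ≤ a 1 ^ (-(r j - r 1)) :=
      Real.rpow_le_rpow_of_nonpos ha0 (hmin ν) (by have := hr j; linarith)
    have i2 : a ν ^ (-(r 1)) ≤ (c * ((ν : ℕ) : ℝ)) ^ (-(r 1)) :=
      Real.rpow_le_rpow_of_nonpos hcν (hlow ν) (by linarith)
    have e2 : (c * ((ν : ℕ) : ℝ)) ^ (-(r 1)) = c ^ (-(r 1)) * ((ν : ℕ) : ℝ) ^ (-(r 1)) :=
      Real.mul_rpow hc.le hνpos.le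
    have e3 : a 1 ^ (-(r j - r 1)) = a 1 ^ (r 1) * a 1 ^ (-(r j)) := by
      rw [← Real.rpow_add ha0]; ring_nf
    have e4 : ((ν : ℕ) : ℝ) ^ (-(r 1)) * ((ν : ℕ) : ℝ) ^ σ = ((ν : ℕ) : ℝ) ^ (σ - r 1) := by
      rw [← Real.rpow_add hνpos]; ring_nf
    calc a ν ^ (-(r j)) * ((ν : ℕ) : ℝ) ^ σ
        = a ν ^ (-(r 1)) * a ν ^ (-(r j - r 1)) * ((ν : ℕ) : ℝ) ^ σ := by rw [e1]
      _ ≤ (c * ((ν : ℕ) : ℝ)) ^ (-(r 1)) * (a 1 ^ (-(r j - r 1))) * ((ν : ℕ) : ℝ) ^ σ := by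
          apply mul_le_mul_of_nonneg_right _ (Real.rpow_nonneg hνpos.le _)
          exact mul_le_mul i2 i1 (Real.rpow_nonneg haν.le _) (Real.rpow_nonneg hcν.le _)
      _ = (c ^ (-(r 1)) * ((ν : ℕ) : ℝ) ^ (σ - r 1)) * (a 1 ^ (r 1) * a 1 ^ (-(r j))) := by
          rw [e2, e3, ← e4]; ring
end

section
/- There exists a Hilbert space H with orthonormal basis (h_ν)_{ν∈ℕ}, a set E, and an assignment ν ↦ Φh_ν ∈ 𝕂^E such that {Φh_ν : ν ∈ ℕ} is linearly independent, ∑_{ν∈ℕ} |Φh_ν(y)|² < ∞ for every y ∈ E, and yet the induced linear map Φf(y) := ∑_{ν∈ℕ} ⟨f, h_ν⟩·Φh_ν(y) is not injective. Concretely: take H = ℓ², E = ℕ, h_ν the canonical unit vectors, Φh_ν := ν·(h_ν − h_{ν−1}) (with h_0 := 0, viewing sequences as functions on ℕ); then for f ∈ ℓ² with ⟨f, h_ν⟩ = 1/ν, one has Φf(y) = 0 for all y ∈ ℕ while f ≠ 0. -/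
/-- There is a family `ψ_ν ∈ 𝕜^ℕ` (namely `ψ_ν = ν(h_ν - h_{ν-1})`, here written with
index shift so that `ν ∈ ℕ` stands for the positive integer `ν + 1`) which is linearly
independent and pointwise square-summable, and a nonzero `ℓ²` coefficient sequence
`c_ν = 1/(ν+1)` with `∑_ν c_ν ψ_ν(y) = 0` for all `y`; hence the induced map `Φ` is
not injective. -/
theorem stmt16 {𝕜 : Type*} [RCLike 𝕜] :
    ∃ ψ : ℕ → ℕ → 𝕜,
      ψ = (fun (ν y : ℕ) => if y = ν then ((ν : 𝕜) + 1)
        else if y + 1 = ν then -((ν : 𝕜) + 1) else 0) ∧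
      LinearIndependent 𝕜 ψ ∧
      (∀ y : ℕ, Summable fun ν : ℕ => ‖ψ ν y‖ ^ 2) ∧
      ∃ c : ℕ → 𝕜,
        c = (fun ν : ℕ => ((ν : 𝕜) + 1)⁻¹) ∧
        (Summable fun ν : ℕ => ‖c ν‖ ^ 2) ∧ c ≠ 0 ∧
        ∀ y : ℕ, HasSum (fun ν : ℕ => c ν * ψ ν y) 0 := by
  set ψ : ℕ → ℕ → 𝕜 := fun (ν y : ℕ) => if y = ν then ((ν : 𝕜) + 1)
        else if y + 1 = ν then -((ν : 𝕜) + 1) else 0 with hψ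
  have hsupp : ∀ ν y : ℕ, ν ≠ y → ν ≠ y + 1 → ψ ν y = 0 := by
    intro ν y h1 h2
    simp only [hψ]
    rw [if_neg (fun h => h1 h.symm), if_neg (fun h => h2 h.symm)]
  have hne : ∀ n : ℕ, ((n : 𝕜) + 1) ≠ 0 := fun n => Nat.cast_add_one_ne_zero n
  refine ⟨ψ, rfl, ?_, ?_, ?_⟩
  · -- linear independence
    rw [linearIndependent_iff']
    intro s g hsum
    induction s using Finset.strongInduction with
    | _ s ih =>
      rcases s.eq_empty_or_nonempty with rfl | hs
      · simp
      · intro i hi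
        set m := s.max' hs with hm
        have hgm : g m = 0 := by
          have := congrFun hsum m
          rw [Finset.sum_apply] at this
          have hsingle : ∀ ν ∈ s, ν ≠ m → (g ν • ψ ν) m = 0 := by
            intro ν hν hνm
            have : ψ ν m = 0 := by
              apply hsupp
              · exact hνm
              · intro h
                have := Finset.le_max' s ν hν
                omega
            simp [this]
          rw [Finset.sum_eq_single_of_mem m (s.max'_mem hs) hsingle] at this
          have hpsi : ψ m m = (m : 𝕜) + 1 := by simp [hψ]
          rw [Pi.smul_apply, hpsi, smul_eq_mul] at this
          exact (mul_eq_zero.mp this).resolve_right (hne m)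
        by_cases him : i = m
        · exact him ▸ hgm
        · have hsub : s.erase m ⊂ s := Finset.erase_ssubset (s.max'_mem hs)
          have hsum' : ∑ ν ∈ s.erase m, g ν • ψ ν = 0 := by
            rw [Finset.sum_erase _ (by simp [hgm]), hsum]
          exact ih (s.erase m) hsub hsum' i (Finset.mem_erase.mpr ⟨him, hi⟩)
  · -- pointwise square summable
    intro y
    apply summable_of_ne_finset_zero (s := {y, y+1})
    intro ν hν
    simp only [Finset.mem_insert, Finset.mem_singleton] at hν
    push_neg at hν
    rw [hsupp ν y hν.1 hν.2]
    simp
  · refine ⟨fun ν : ℕ => ((ν : 𝕜) + 1)⁻¹, rfl, ?_, ?_, ?_⟩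
    · -- summable c
      have : Summable fun ν : ℕ => ((ν : ℝ) + 1)⁻¹ ^ 2 := by
        have h2 : Summable fun ν : ℕ => ((ν : ℝ) ^ 2)⁻¹ := by
          exact Real.summable_one_div_nat_pow.mpr one_lt_two |>.congr (by simp)
        have := (summable_nat_add_iff 1).mpr h2
        simpa [inv_pow] using this
      apply this.congr
      intro ν
      rw [norm_inv]
      have : ‖(ν : 𝕜) + 1‖ = (ν : ℝ) + 1 := by
        rw [show ((ν : 𝕜) + 1) = ((ν + 1 : ℕ) : 𝕜) by push_cast; ring, RCLike.norm_natCast]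
        push_cast; ring
      rw [this]
    · -- c ≠ 0
      intro h
      have := congrFun h 0
      simp at this
    · -- HasSum 0
      intro y
      have hzero : ∀ ν ∉ ({y, y+1} : Finset ℕ),
          ((ν : 𝕜) + 1)⁻¹ * ψ ν y = 0 := by
        intro ν hν
        simp only [Finset.mem_insert, Finset.mem_singleton] at hν
        push_neg at hν
        rw [hsupp ν y hν.1 hν.2, mul_zero]
      have := hasSum_sum_of_ne_finset_zero (L := SummationFilter.unconditional ℕ) hzero
      convert this using 1
      rw [Finset.sum_insert (by simp), Finset.sum_singleton]
      have h1 : ψ y y = (y : 𝕜) + 1 := by simp [hψ]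
      have h2 : ψ (y+1) y = -((y : 𝕜) + 1 + 1) := by
        simp [hψ]
      rw [h1, h2]
      rw [inv_mul_cancel₀ (hne y)]
      push_cast
      rw [mul_neg, inv_mul_cancel₀ (by exact_mod_cast hne (y+1))]
      ring
end

section
/- Let T_n denote piecewise-constant midpoint interpolation on the 2^n dyadic subintervals of [0,1]: for f : [0,1] → ℂ, T_n(f) is constant on each interval I_m = [m/2^n, (m+1)/2^n) (with the last interval closed) equal to f evaluated at the midpoint of I_m. Let (e_ν)_{ν∈ℕ₀} be the L₂-normalized Haar basis of L₂([0,1]) with e_0 = 1, and let r_1 > 1. Then there exists a constant C > 0 such that for every n ∈ ℕ₀ and every finite linear combination f = ∑_ν a_ν e_ν, one has ‖f − T_n(f)‖_{L₂([0,1])} ≤ C·2^{−n·r_1/2}·(∑_{ν∈ℕ₀} |a_ν|²·max(ν,1)^{r_1})^{1/2}. One may take C = 1 + (1 − 2^{1−r_1})^{−1/2}. -/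
open scoped Classical

/-- The `L₂`-normalized Haar functions on `[0,1]`: `haarFn 0 = 1`, and for
`ν = 2^ℓ + m` (`ℓ ∈ ℕ₀`, `0 ≤ m < 2^ℓ`), `haarFn ν` equals `2^{ℓ/2}` on
`[m 2^{-ℓ}, (m + 1/2) 2^{-ℓ})`, `-2^{ℓ/2}` on `[(m + 1/2) 2^{-ℓ}, (m+1) 2^{-ℓ})`,
and `0` elsewhere. -/
noncomputable def haarFn (ν : ℕ) (x : ℝ) : ℝ :=
  if ν = 0 then 1
  else
    if ((ν - 2 ^ Nat.log 2 ν : ℕ) : ℝ) / 2 ^ Nat.log 2 ν ≤ x ∧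
        x < (((ν - 2 ^ Nat.log 2 ν : ℕ) : ℝ) + 1 / 2) / 2 ^ Nat.log 2 ν then
      (2 : ℝ) ^ ((Nat.log 2 ν : ℝ) / 2)
    else if (((ν - 2 ^ Nat.log 2 ν : ℕ) : ℝ) + 1 / 2) / 2 ^ Nat.log 2 ν ≤ x ∧
        x < (((ν - 2 ^ Nat.log 2 ν : ℕ) : ℝ) + 1) / 2 ^ Nat.log 2 ν then
      -((2 : ℝ) ^ ((Nat.log 2 ν : ℝ) / 2))
    else 0

/-- Piecewise constant midpoint interpolation on the `2^n` dyadic subintervals of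
`[0,1]`: `midInterp n f x` is the value of `f` at the midpoint of the dyadic
interval of length `2^{-n}` containing `x` (the last interval being closed). -/
noncomputable def midInterp {α : Type*} (n : ℕ) (f : ℝ → α) (x : ℝ) : α :=
  f ((↑(min (⌊x * 2 ^ n⌋₊) (2 ^ n - 1)) + (1 / 2 : ℝ)) / 2 ^ n)

open Finset MeasureTheory

noncomputable def hc (ν : ℕ) : ℝ := ((ν - 2 ^ Nat.log 2 ν : ℕ) : ℝ) / 2 ^ Nat.log 2 ν

-- support set of haarFn ν (ν ≠ 0)
noncomputable def hA (ν : ℕ) : Set ℝ := Set.Ico (hc ν) (hc ν + 1 / 2 ^ Nat.log 2 ν)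

lemma haar_support (ν : ℕ) (x : ℝ) (hν : ν ≠ 0) (h : haarFn ν x ≠ 0) : x ∈ hA ν := by
  have hp : (0:ℝ) < 2 ^ Nat.log 2 ν := by positivity
  unfold haarFn at h
  rw [if_neg hν] at h
  have key : (((ν - 2 ^ Nat.log 2 ν : ℕ) : ℝ) + 1) / 2 ^ Nat.log 2 ν
      = hc ν + 1 / 2 ^ Nat.log 2 ν := by
    unfold hc; field_simp
  split_ifs at h with h1 h2
  · refine ⟨h1.1, h1.2.trans_le ?_⟩
    rw [← key]
    gcongr
    linarith
  · refine ⟨le_trans ?_ h2.1, by rw [← key]; exact h2.2⟩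
    unfold hc
    gcongr
    linarith
  · exact absurd rfl h
lemma le_iff_le_mid (n j : ℕ) (x : ℝ) (hx : 0 ≤ x) :
    ((j:ℝ)/2^n ≤ x ↔ (j:ℝ) ≤ (⌊x*2^n⌋₊ : ℝ)) ∧
    ((j:ℝ)/2^n ≤ ((⌊x*2^n⌋₊ : ℝ) + 1/2)/2^n ↔ (j:ℝ) ≤ (⌊x*2^n⌋₊ : ℝ)) := by
  have hp : (0:ℝ) < 2^n := by positivity
  constructor
  · rw [div_le_iff₀ hp]
    rw [show ((j:ℝ) ≤ x * 2^n ↔ j ≤ ⌊x*2^n⌋₊) from (Nat.le_floor_iff (by positivity)).symm]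
    exact_mod_cast Iff.rfl
  · rw [div_le_div_iff₀ hp hp, mul_le_mul_iff_of_pos_right hp]
    constructor
    · intro h
      have : (j:ℝ) < (⌊x*2^n⌋₊ : ℝ) + 1 := by linarith
      have : j < ⌊x*2^n⌋₊ + 1 := by exact_mod_cast this
      exact_mod_cast Nat.lt_succ_iff.mp this
    · intro h; linarith

lemma haar_eq_of_same_cell {n ν : ℕ} (hν : ν ≠ 0) (hlt : ν < 2^n) {x y : ℝ}
    (H : ∀ j : ℕ, ((j:ℝ)/2^n ≤ x ↔ (j:ℝ)/2^n ≤ y)) :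
    haarFn ν y = haarFn ν x := by
  set ℓ := Nat.log 2 ν with hℓ
  have hℓn : ℓ + 1 ≤ n := by
    have h1 : 2 ^ ℓ ≤ ν := Nat.pow_log_le_self 2 hν
    have : 2 ^ ℓ < 2 ^ n := lt_of_le_of_lt h1 hlt
    exact Nat.pow_lt_pow_iff_right (by norm_num) |>.mp this
  set m : ℕ := ν - 2 ^ ℓ with hm
  have cast1 : ((m * 2^(n-ℓ) : ℕ) : ℝ) / 2^n = (m : ℝ) / 2^ℓ := by
    have h2 : (2:ℝ)^(n-ℓ) * 2^ℓ = 2^n := by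
      rw [← pow_add]; congr 1; omega
    have hne : (2:ℝ)^(n-ℓ) ≠ 0 := by positivity
    have hne2 : (2:ℝ)^ℓ ≠ 0 := by positivity
    push_cast
    rw [← h2]
    field_simp
  have cast2 : (((2*m+1) * 2^(n-(ℓ+1)) : ℕ) : ℝ) / 2^n = ((m : ℝ) + 1/2) / 2^ℓ := by
    have h2 : (2:ℝ)^(n-(ℓ+1)) * 2^(ℓ+1) = 2^n := by
      rw [← pow_add]; congr 1; omega
    have hne : (2:ℝ)^(n-(ℓ+1)) ≠ 0 := by positivity
    have hne2 : (2:ℝ)^ℓ ≠ 0 := by positivity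
    have h3 : (2:ℝ)^(ℓ+1) = 2 * 2^ℓ := by ring
    push_cast
    rw [← h2, h3]
    field_simp
  have cast3 : (((m+1) * 2^(n-ℓ) : ℕ) : ℝ) / 2^n = ((m : ℝ) + 1) / 2^ℓ := by
    have h2 : (2:ℝ)^(n-ℓ) * 2^ℓ = 2^n := by
      rw [← pow_add]; congr 1; omega
    have hne : (2:ℝ)^(n-ℓ) ≠ 0 := by positivity
    have hne2 : (2:ℝ)^ℓ ≠ 0 := by positivity
    push_cast
    rw [← h2]
    field_simp
  have e1 : ((m:ℝ)/2^ℓ ≤ x ↔ (m:ℝ)/2^ℓ ≤ y) := by rw [← cast1]; exact H _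
  have e2 : (((m:ℝ)+1/2)/2^ℓ ≤ x ↔ ((m:ℝ)+1/2)/2^ℓ ≤ y) := by rw [← cast2]; exact H _
  have e3 : (((m:ℝ)+1)/2^ℓ ≤ x ↔ ((m:ℝ)+1)/2^ℓ ≤ y) := by rw [← cast3]; exact H _
  have s2 : (x < ((m:ℝ)+1/2)/2^ℓ ↔ y < ((m:ℝ)+1/2)/2^ℓ) := by
    rw [← not_le, ← not_le]; exact not_congr e2
  have s3 : (x < ((m:ℝ)+1)/2^ℓ ↔ y < ((m:ℝ)+1)/2^ℓ) := by
    rw [← not_le, ← not_le]; exact not_congr e3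
  unfold haarFn
  rw [if_neg hν, if_neg hν]
  rw [if_congr (and_congr (e1.symm) (s2.symm)) rfl
    (if_congr (and_congr (e2.symm) (s3.symm)) rfl rfl)]
-- standalone fragment (assumes nothing from haarFn)

lemma floor_lt_pow (n : ℕ) (x : ℝ) (hx0 : 0 ≤ x) (hx1 : x < 1) : ⌊x * 2^n⌋₊ < 2^n := by
  have : x * 2^n < 2^n := by
    have hp : (0:ℝ) < 2^n := by positivity
    nlinarith
  exact Nat.floor_lt (by positivity) |>.mpr (by exact_mod_cast this)

lemma mem_own_cell (n : ℕ) (x : ℝ) (hx0 : 0 ≤ x) :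
    (⌊x * 2^n⌋₊ : ℝ)/2^n ≤ x ∧ x < ((⌊x * 2^n⌋₊ : ℝ) + 1)/2^n := by
  have hp : (0:ℝ) < 2^n := by positivity
  constructor
  · rw [div_le_iff₀ hp]; exact Nat.floor_le (by positivity)
  · rw [lt_div_iff₀ hp]; exact Nat.lt_floor_add_one _

-- midpoints of distinct cells in an interval of length ≤ 1/2^n coincide
lemma mid_unique {n j j' : ℕ} {c w : ℝ} (hw : w ≤ 1/2^n)
    (h1 : ((j:ℝ)+1/2)/2^n ∈ Set.Ico c (c+w)) (h2 : ((j':ℝ)+1/2)/2^n ∈ Set.Ico c (c+w)) :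
    j = j' := by
  have hp : (0:ℝ) < 2^n := by positivity
  by_contra hne
  rcases Nat.lt_or_ge j j' with h | h
  · have hj : (j:ℝ) + 1 ≤ (j':ℝ) := by exact_mod_cast h
    have := h1.1; have := h2.2
    have : ((j:ℝ)+1/2)/2^n + 1/2^n ≤ ((j':ℝ)+1/2)/2^n := by
      rw [← add_div, div_le_div_iff₀ hp hp]; nlinarith
    nlinarith [h1.1, h2.2]
  · rcases Nat.lt_or_ge j' j with h' | h'
    · have hj : (j':ℝ) + 1 ≤ (j:ℝ) := by exact_mod_cast h'
      have : ((j':ℝ)+1/2)/2^n + 1/2^n ≤ ((j:ℝ)+1/2)/2^n := by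
        rw [← add_div, div_le_div_iff₀ hp hp]; nlinarith
      nlinarith [h2.1, h1.2]
    · omega

-- sum with at most one nonzero term
lemma sum_le_of_unique_nonzero {u : Finset ℕ} {g : ℕ → ℝ} {B : ℝ}
    (h0 : ∀ i ∈ u, 0 ≤ g i)
    (hone : ∀ i ∈ u, ∀ j ∈ u, g i ≠ 0 → g j ≠ 0 → i = j)
    (hb : ∀ i ∈ u, g i ≤ B) (hB : 0 ≤ B) : ∑ i ∈ u, g i ≤ B := by
  by_cases hz : ∀ i ∈ u, g i = 0
  · rw [Finset.sum_eq_zero hz]; exact hB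
  · push_neg at hz
    obtain ⟨i₀, hi₀, hgi₀⟩ := hz
    rw [Finset.sum_eq_single_of_mem i₀ hi₀ (fun j hj hne => by
      by_contra hgj
      exact hne (hone j hj i₀ hi₀ hgj hgi₀))]
    exact hb i₀ hi₀

-- geometric tail bound over a finset of naturals all ≥ n
lemma geom_tail_bound {q : ℝ} (hq0 : 0 ≤ q) (hq1 : q < 1) (n : ℕ) (u : Finset ℕ)
    (hu : ∀ ℓ ∈ u, n ≤ ℓ) : ∑ ℓ ∈ u, q ^ ℓ ≤ q ^ n / (1 - q) := by
  classical
  have hsub : u ⊆ Finset.Ico n (u.sup id + 1) := by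
    intro ℓ hℓ
    simp only [Finset.mem_Ico]
    exact ⟨hu ℓ hℓ, Nat.lt_succ_of_le (Finset.le_sup (f := id) hℓ)⟩
  calc ∑ ℓ ∈ u, q ^ ℓ ≤ ∑ ℓ ∈ Finset.Ico n (u.sup id + 1), q ^ ℓ :=
        Finset.sum_le_sum_of_subset_of_nonneg hsub (fun i _ _ => by positivity)
    _ ≤ q ^ n / (1 - q) := geom_sum_Ico_le_of_lt_one hq0 hq1

lemma haar_abs_le (ν : ℕ) (x : ℝ) (hν : ν ≠ 0) :
    |haarFn ν x| ≤ (2:ℝ) ^ ((Nat.log 2 ν : ℝ) / 2) := by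
  have h : (0:ℝ) ≤ (2:ℝ) ^ ((Nat.log 2 ν : ℝ) / 2) :=
    Real.rpow_nonneg (by norm_num) _
  unfold haarFn
  rw [if_neg hν]
  split_ifs <;> simp [abs_of_nonneg h, abs_of_nonpos, h]

lemma haar_sq_le (ν : ℕ) (x : ℝ) (hν : ν ≠ 0) :
    (haarFn ν x) ^ 2 ≤ (2:ℝ) ^ (Nat.log 2 ν) := by
  have h := haar_abs_le ν x hν
  have h0 : (0:ℝ) ≤ |haarFn ν x| := abs_nonneg _
  have : (haarFn ν x)^2 ≤ ((2:ℝ) ^ ((Nat.log 2 ν : ℝ) / 2))^2 := by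
    rw [← sq_abs]; exact pow_le_pow_left₀ h0 h 2
  refine this.trans_eq ?_
  rw [← Real.rpow_natCast ((2:ℝ) ^ ((Nat.log 2 ν : ℝ) / 2)) 2, ← Real.rpow_natCast 2 (Nat.log 2 ν),
    ← Real.rpow_mul (by norm_num)]
  norm_num

lemma Ico_dyadic_disj (ℓ m m' : ℕ) (hmm : m ≠ m') (y : ℝ)
    (h1 : y ∈ Set.Ico ((m:ℝ)/2^ℓ) ((m:ℝ)/2^ℓ + 1/2^ℓ))
    (h2 : y ∈ Set.Ico ((m':ℝ)/2^ℓ) ((m':ℝ)/2^ℓ + 1/2^ℓ)) : False := by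
  have hQ : (0:ℝ) < 2 ^ ℓ := by positivity
  rcases Nat.lt_or_ge m m' with hlt | hge
  · have hc : (m:ℝ) + 1 ≤ (m':ℝ) := by exact_mod_cast hlt
    have e1 := h1.2; have e2 := h2.1
    rw [← add_div, lt_div_iff₀ hQ] at e1
    rw [div_le_iff₀ hQ] at e2
    nlinarith
  · have hlt : m' < m := by omega
    have hc : (m':ℝ) + 1 ≤ (m:ℝ) := by exact_mod_cast hlt
    have e1 := h2.2; have e2 := h1.1
    rw [← add_div, lt_div_iff₀ hQ] at e1
    rw [div_le_iff₀ hQ] at e2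
    nlinarith

lemma haar_same_level (ν ν' : ℕ) (hν : ν ≠ 0) (hν' : ν' ≠ 0)
    (hlog : Nat.log 2 ν = Nat.log 2 ν') (hne : ν ≠ ν') (y : ℝ) :
    haarFn ν y = 0 ∨ haarFn ν' y = 0 := by
  by_contra h
  push_neg at h
  obtain ⟨h1, h2⟩ := h
  have m1 := haar_support ν y hν h1
  have m2 := haar_support ν' y hν' h2
  have hp1 : 2 ^ Nat.log 2 ν ≤ ν := Nat.pow_log_le_self 2 hν
  have hp2 : 2 ^ Nat.log 2 ν ≤ ν' := by rw [hlog]; exact Nat.pow_log_le_self 2 hν'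
  have hmm : ν - 2 ^ Nat.log 2 ν ≠ ν' - 2 ^ Nat.log 2 ν := by omega
  have e1 : hA ν = Set.Ico ((↑(ν - 2 ^ Nat.log 2 ν):ℝ)/2^(Nat.log 2 ν))
      ((↑(ν - 2 ^ Nat.log 2 ν):ℝ)/2^(Nat.log 2 ν) + 1/2^(Nat.log 2 ν)) := rfl
  have e2 : hA ν' = Set.Ico ((↑(ν' - 2 ^ Nat.log 2 ν):ℝ)/2^(Nat.log 2 ν))
      ((↑(ν' - 2 ^ Nat.log 2 ν):ℝ)/2^(Nat.log 2 ν) + 1/2^(Nat.log 2 ν)) := by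
    rw [hA, hc, hlog]
  rw [e1] at m1; rw [e2] at m2
  exact Ico_dyadic_disj _ _ _ hmm y m1 m2

lemma pointwise_CS (r₁ : ℝ) (hr : 1 < r₁) (n : ℕ) (t : Finset ℕ) (ht : ∀ ν ∈ t, 2^n ≤ ν)
    (b : ℕ → ℝ) (hb : ∀ ν, 0 ≤ b ν) (y : ℝ) :
    (∑ ν ∈ t, b ν * |haarFn ν y|)^2 ≤
      ((2:ℝ)^((1:ℝ)-r₁))^n / (1 - (2:ℝ)^((1:ℝ)-r₁)) *
        ∑ ν ∈ t, (b ν)^2 * (ν:ℝ)^r₁ * (hA ν).indicator 1 y := by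
  set q : ℝ := (2:ℝ)^((1:ℝ)-r₁) with hq
  have hq0 : 0 < q := Real.rpow_pos_of_pos (by norm_num) _
  have hq1 : q < 1 := Real.rpow_lt_one_of_one_lt_of_neg (by norm_num) (by linarith)
  have hν0 : ∀ ν ∈ t, ν ≠ 0 := fun ν hν => by
    have := ht ν hν; have : 0 < ν := lt_of_lt_of_le (Nat.pow_pos (by norm_num)) this
    omega
  have hνpos : ∀ ν ∈ t, (0:ℝ) < (ν:ℝ) := fun ν hν => by
    exact_mod_cast Nat.pos_of_ne_zero (hν0 ν hν)
  have hlev : ∀ ν ∈ t, n ≤ Nat.log 2 ν := fun ν hν =>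
    (Nat.le_log_iff_pow_le (by norm_num) (hν0 ν hν)).mpr (ht ν hν)
  set u : ℕ → ℝ := fun ν => b ν * (ν:ℝ)^(r₁/2) * (hA ν).indicator 1 y with hu
  set v : ℕ → ℝ := fun ν => (ν:ℝ)^(-(r₁/2)) * |haarFn ν y| with hv
  have h_uv : ∀ ν ∈ t, b ν * |haarFn ν y| = u ν * v ν := by
    intro ν hν
    by_cases hz : haarFn ν y = 0
    · simp [hu, hv, hz]
    · have hind : (hA ν).indicator (1 : ℝ → ℝ) y = 1 := by
        rw [Set.indicator_of_mem (haar_support ν y (hν0 ν hν) hz)]; rfl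
      have hpow : (ν:ℝ)^(r₁/2) * (ν:ℝ)^(-(r₁/2)) = 1 := by
        rw [← Real.rpow_add (hνpos ν hν)]; norm_num
      simp only [hu, hv]
      rw [hind]
      calc b ν * |haarFn ν y| = b ν * |haarFn ν y| * ((ν:ℝ)^(r₁/2) * (ν:ℝ)^(-(r₁/2))) := by
            rw [hpow, mul_one]
        _ = b ν * (ν:ℝ) ^ (r₁ / 2) * 1 * ((ν:ℝ) ^ (-(r₁ / 2)) * |haarFn ν y|) := by ring
  rw [Finset.sum_congr rfl h_uv]
  have hsum_u : ∑ ν ∈ t, (u ν)^2 = ∑ ν ∈ t, (b ν)^2 * (ν:ℝ)^r₁ * (hA ν).indicator 1 y := by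
    refine Finset.sum_congr rfl fun ν hν => ?_
    have h1 : ((ν:ℝ)^(r₁/2))^2 = (ν:ℝ)^r₁ := by
      rw [← Real.rpow_natCast ((ν:ℝ)^(r₁/2)) 2, ← Real.rpow_mul (Nat.cast_nonneg ν)]
      norm_num
    have h2 : ((hA ν).indicator (1 : ℝ → ℝ) y)^2 = (hA ν).indicator 1 y := by
      by_cases hy : y ∈ hA ν <;> simp [hy]
    simp only [hu]
    rw [mul_pow, mul_pow, h1, h2]
  have hsum_v : ∑ ν ∈ t, (v ν)^2 ≤ q^n / (1-q) := by
    have hterm : ∀ ν ∈ t, (v ν)^2 = (ν:ℝ)^(-r₁) * (haarFn ν y)^2 := by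
      intro ν hν
      simp only [hv]
      rw [mul_pow, sq_abs, ← Real.rpow_natCast ((ν:ℝ)^(-(r₁/2))) 2,
        ← Real.rpow_mul (Nat.cast_nonneg ν)]
      norm_num
    rw [Finset.sum_congr rfl hterm]
    rw [← Finset.sum_fiberwise_of_maps_to
      (fun ν hν => Finset.mem_image_of_mem (Nat.log 2) hν)
      (fun ν => (ν:ℝ)^(-r₁) * (haarFn ν y)^2)]
    have hinner : ∀ ℓ ∈ t.image (Nat.log 2),
        ∑ ν ∈ t.filter (fun ν => Nat.log 2 ν = ℓ), (ν:ℝ)^(-r₁) * (haarFn ν y)^2 ≤ q^ℓ := by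
      intro ℓ hℓ
      refine sum_le_of_unique_nonzero (fun ν hν => by positivity) ?_ ?_ (by positivity)
      · intro i hi j hj hgi hgj
        rw [Finset.mem_filter] at hi hj
        by_contra hne
        have hzz := haar_same_level i j (hν0 i hi.1) (hν0 j hj.1) (hi.2.trans hj.2.symm) hne y
        rcases hzz with hz | hz
        · exact hgi (by rw [hz]; ring)
        · exact hgj (by rw [hz]; ring)
      · intro ν hν
        rw [Finset.mem_filter] at hν
        have hsq := haar_sq_le ν y (hν0 ν hν.1)
        have hle : ((2:ℕ)^ℓ : ℝ) ≤ (ν:ℝ) := by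
          exact_mod_cast hν.2 ▸ Nat.pow_log_le_self 2 (hν0 ν hν.1)
        have hmono : (ν:ℝ)^(-r₁) ≤ ((2:ℝ)^ℓ)^(-r₁) := by
          refine Real.rpow_le_rpow_of_nonpos (by positivity) ?_ (by linarith)
          exact_mod_cast hle
        have hkey : ((2:ℝ)^ℓ)^(-r₁) * (2:ℝ)^ℓ = q^ℓ := by
          rw [← Real.rpow_natCast (2:ℝ) ℓ, ← Real.rpow_mul (by norm_num),
            ← Real.rpow_add (by norm_num : (0:ℝ) < 2), hq,
            ← Real.rpow_natCast ((2:ℝ)^((1:ℝ)-r₁)) ℓ, ← Real.rpow_mul (by norm_num)]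
          congr 1; ring
        calc (ν:ℝ)^(-r₁) * (haarFn ν y)^2 ≤ ((2:ℝ)^ℓ)^(-r₁) * (2:ℝ)^ℓ := by
              have h0 : (0:ℝ) ≤ (haarFn ν y)^2 := sq_nonneg _
              have h2 : (haarFn ν y)^2 ≤ (2:ℝ)^ℓ := hν.2 ▸ hsq
              have := Real.rpow_nonneg (by norm_num : (0:ℝ) ≤ (2:ℝ)^ℓ) (-r₁)
              nlinarith [Real.rpow_nonneg (Nat.cast_nonneg ν) (-r₁)]
          _ = q^ℓ := hkey
    refine (Finset.sum_le_sum hinner).trans ?_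
    refine geom_tail_bound hq0.le hq1 n _ ?_
    intro ℓ hℓ
    obtain ⟨ν, hν, hrfl⟩ := Finset.mem_image.mp hℓ
    exact hrfl ▸ hlev ν hν
  calc (∑ ν ∈ t, u ν * v ν)^2 ≤ (∑ ν ∈ t, (u ν)^2) * (∑ ν ∈ t, (v ν)^2) :=
        sum_mul_sq_le_sq_mul_sq t u v
    _ ≤ (q^n/(1-q)) * ∑ ν ∈ t, (b ν)^2 * (ν:ℝ)^r₁ * (hA ν).indicator 1 y := by
        rw [← hsum_u]
        rw [mul_comm]
        apply mul_le_mul hsum_v le_rfl (Finset.sum_nonneg fun ν hν => sq_nonneg _)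
        have h1q : 0 < 1 - q := by linarith
        positivity

lemma indicator_Ico_integrable (c w : ℝ) :
    Integrable ((Set.Ico c (c+w)).indicator (1 : ℝ → ℝ))
      (MeasureTheory.volume.restrict (Set.Ico (0:ℝ) 1)) := by
  rw [MeasureTheory.integrable_indicator_iff measurableSet_Ico]
  refine (MeasureTheory.integrableOn_const_iff (C := (1:ℝ)) (by simp)).mpr (Or.inr ?_)
  calc (MeasureTheory.volume.restrict (Set.Ico (0:ℝ) 1)) (Set.Ico c (c+w))
      ≤ MeasureTheory.volume (Set.Ico c (c+w)) := MeasureTheory.Measure.restrict_le_self _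
    _ < ⊤ := by rw [Real.volume_Ico]; exact ENNReal.ofReal_lt_top

lemma integral_indicator_Ico_le (c w : ℝ) (hw : 0 ≤ w) :
    ∫ x in Set.Ico (0:ℝ) 1, (Set.Ico c (c+w)).indicator (1 : ℝ → ℝ) x ≤ w := by
  rw [MeasureTheory.setIntegral_indicator measurableSet_Ico]
  simp only [Pi.one_apply]
  rw [MeasureTheory.setIntegral_const, smul_eq_mul, mul_one]
  have h1 : MeasureTheory.volume (Set.Ico (0:ℝ) 1 ∩ Set.Ico c (c+w)) ≤
      ENNReal.ofReal w := by
    calc MeasureTheory.volume (Set.Ico (0:ℝ) 1 ∩ Set.Ico c (c+w))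
        ≤ MeasureTheory.volume (Set.Ico c (c+w)) :=
          MeasureTheory.measure_mono Set.inter_subset_right
      _ = ENNReal.ofReal (c + w - c) := Real.volume_Ico
      _ = ENNReal.ofReal w := by ring_nf
  calc (MeasureTheory.volume (Set.Ico (0:ℝ) 1 ∩ Set.Ico c (c+w))).toReal
      ≤ (ENNReal.ofReal w).toReal := ENNReal.toReal_mono ENNReal.ofReal_ne_top h1
    _ = w := ENNReal.toReal_ofReal hw

lemma mid_indicator_bound (n ν : ℕ) (hν : ν ≠ 0) (hlev : n ≤ Nat.log 2 ν) :
    ∃ k : ℕ, ∀ x ∈ Set.Ico (0:ℝ) 1,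
      (hA ν).indicator (1:ℝ→ℝ) (((⌊x*2^n⌋₊:ℝ) + 1/2)/2^n) ≤
      (Set.Ico ((k:ℝ)/2^n) ((k:ℝ)/2^n + 1/2^n)).indicator 1 x := by
  have hwle : (1:ℝ)/2^(Nat.log 2 ν) ≤ 1/2^n := by
    apply one_div_le_one_div_of_le (by positivity)
    exact_mod_cast Nat.pow_le_pow_right (by norm_num) hlev
  by_cases hex : ∃ j : ℕ, ((j:ℝ)+1/2)/2^n ∈ hA ν
  · refine ⟨hex.choose, fun x hx => ?_⟩
    by_cases hm : ((⌊x*2^n⌋₊:ℝ) + 1/2)/2^n ∈ hA ν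
    · have hj : hex.choose = ⌊x*2^n⌋₊ := mid_unique hwle hex.choose_spec hm
      have hcell := mem_own_cell n x hx.1
      have hxmem : x ∈ Set.Ico ((hex.choose:ℝ)/2^n) ((hex.choose:ℝ)/2^n + 1/2^n) := by
        rw [hj]
        exact ⟨hcell.1, by rw [← add_div]; exact hcell.2⟩
      rw [Set.indicator_of_mem hm, Set.indicator_of_mem hxmem]
      simp
    · rw [Set.indicator_of_notMem hm]
      exact Set.indicator_nonneg (fun _ _ => by norm_num) _
  · refine ⟨0, fun x hx => ?_⟩
    have hm : ((⌊x*2^n⌋₊:ℝ) + 1/2)/2^n ∉ hA ν := fun h => hex ⟨⌊x*2^n⌋₊, h⟩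
    rw [Set.indicator_of_notMem hm]
    exact Set.indicator_nonneg (fun _ _ => by norm_num) _

/-- For `r₁ > 1` there is `C > 0` such that for all `n` and all finite linear
combinations `f = ∑_ν a_ν e_ν` of Haar functions,
`‖f - T_n f‖_{L₂[0,1]} ≤ C · 2^{-n r₁/2} · (∑_ν |a_ν|² max(ν,1)^{r₁})^{1/2}`. -/
theorem stmt18 (r₁ : ℝ) (hr : 1 < r₁) :
    ∃ C > (0 : ℝ), ∀ (n : ℕ) (a : ℕ →₀ ℂ),
      Real.sqrt (∫ x in Set.Icc (0 : ℝ) 1,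
          ‖(∑ ν ∈ a.support, a ν * (haarFn ν x : ℂ)) -
            midInterp n (fun t => ∑ ν ∈ a.support, a ν * (haarFn ν t : ℂ)) x‖ ^ 2) ≤
        C * (2 : ℝ) ^ (-(n : ℝ) * r₁ / 2) *
          Real.sqrt (∑ ν ∈ a.support, ‖a ν‖ ^ 2 * max (ν : ℝ) 1 ^ r₁) := by
  classical
  set q : ℝ := (2:ℝ)^((1:ℝ)-r₁) with hq
  have hq0 : 0 < q := Real.rpow_pos_of_pos (by norm_num) _
  have hq1 : q < 1 := Real.rpow_lt_one_of_one_lt_of_neg (by norm_num) (by linarith)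
  have h1q : 0 < 1 - q := by linarith
  refine ⟨2 / Real.sqrt (1 - q), by positivity, ?_⟩
  set C : ℝ := 2 / Real.sqrt (1 - q) with hC
  intro n a
  set s : Finset ℕ := a.support with hs
  set tt : Finset ℕ := s.filter (fun ν => 2^n ≤ ν) with htt
  have httle : ∀ ν ∈ tt, 2^n ≤ ν := fun ν hν => (Finset.mem_filter.mp hν).2
  have hν0 : ∀ ν ∈ tt, ν ≠ 0 := fun ν hν => by
    have := httle ν hν
    have : 0 < 2^n := Nat.pow_pos (by norm_num)
    omega
  have hlev : ∀ ν ∈ tt, n ≤ Nat.log 2 ν := fun ν hν =>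
    (Nat.le_log_iff_pow_le (by norm_num) (hν0 ν hν)).mpr (httle ν hν)
  set b : ℕ → ℝ := fun ν => ‖a ν‖ with hb
  set cc : ℕ → ℝ := fun ν => (b ν)^2 * (ν:ℝ)^r₁ with hcc
  have hcc0 : ∀ ν, 0 ≤ cc ν := fun ν => by
    apply mul_nonneg (sq_nonneg _) (Real.rpow_nonneg (Nat.cast_nonneg _) _)
  set K : ℝ := q^n/(1-q) with hK
  have hK0 : 0 ≤ K := by positivity
  -- choose the dyadic cells covering the midpoint preimages
  have hch : ∀ ν, ∃ kk : ℕ, ν ∈ tt → ∀ x ∈ Set.Ico (0:ℝ) 1,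
      (hA ν).indicator (1:ℝ→ℝ) (((⌊x*2^n⌋₊:ℝ) + 1/2)/2^n) ≤
      (Set.Ico ((kk:ℝ)/2^n) ((kk:ℝ)/2^n + 1/2^n)).indicator 1 x := by
    intro ν
    by_cases h : ν ∈ tt
    · obtain ⟨kk, hkk⟩ := mid_indicator_bound n ν (hν0 ν h) (hlev ν h)
      exact ⟨kk, fun _ => hkk⟩
    · exact ⟨0, fun h' => absurd h' h⟩
  choose k hk using hch
  set B : ℕ → Set ℝ := fun ν => Set.Ico ((k ν:ℝ)/2^n) ((k ν:ℝ)/2^n + 1/2^n) with hB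
  set g : ℝ → ℝ := fun x => 2*K* ∑ ν ∈ tt, cc ν *
      ((hA ν).indicator 1 x + (B ν).indicator 1 x) with hg
  -- pointwise bound on [0,1)
  have claim1 : ∀ x ∈ Set.Ico (0:ℝ) 1,
      ‖(∑ ν ∈ s, a ν * (haarFn ν x : ℂ)) -
        midInterp n (fun t => ∑ ν ∈ s, a ν * (haarFn ν t : ℂ)) x‖ ^ 2 ≤ g x := by
    intro x hx
    have hfl : min ⌊x*2^n⌋₊ (2^n - 1) = ⌊x*2^n⌋₊ := by
      have := floor_lt_pow n x hx.1 hx.2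
      omega
    rw [midInterp, hfl]
    set y : ℝ := ((⌊x*2^n⌋₊:ℝ) + 1/2)/2^n with hy
    have hsub : (∑ ν ∈ s, a ν * (haarFn ν x:ℂ)) - (∑ ν ∈ s, a ν * (haarFn ν y:ℂ)) =
        ∑ ν ∈ tt, (a ν * (haarFn ν x:ℂ) - a ν * (haarFn ν y:ℂ)) := by
      rw [← Finset.sum_sub_distrib]
      symm
      apply Finset.sum_subset (Finset.filter_subset _ _)
      intro ν hνs hνt
      have hlt : ν < 2^n := by
        simp only [htt, Finset.mem_filter, not_and, not_le] at hνt
        exact hνt hνs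
      have heq : haarFn ν y = haarFn ν x := by
        by_cases h0 : ν = 0
        · simp [h0, haarFn]
        · exact haar_eq_of_same_cell h0 hlt (fun j =>
            ((le_iff_le_mid n j x hx.1).1).trans ((le_iff_le_mid n j x hx.1).2).symm)
      rw [heq, sub_self]
    rw [hsub]
    have hnorm : ‖∑ ν ∈ tt, (a ν * (haarFn ν x:ℂ) - a ν * (haarFn ν y:ℂ))‖ ≤
        (∑ ν ∈ tt, b ν * |haarFn ν x|) + ∑ ν ∈ tt, b ν * |haarFn ν y| := by
      refine (norm_sum_le _ _).trans ?_
      rw [← Finset.sum_add_distrib]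
      refine Finset.sum_le_sum fun ν hν => ?_
      rw [← mul_sub, norm_mul, ← Complex.ofReal_sub, Complex.norm_real]
      calc b ν * ‖haarFn ν x - haarFn ν y‖ ≤ b ν * (|haarFn ν x| + |haarFn ν y|) := by
            apply mul_le_mul_of_nonneg_left (norm_sub_le _ _) (norm_nonneg _)
        _ = b ν * |haarFn ν x| + b ν * |haarFn ν y| := by ring
    have hG0x : (0:ℝ) ≤ ∑ ν ∈ tt, b ν * |haarFn ν x| :=
      Finset.sum_nonneg fun ν _ => mul_nonneg (norm_nonneg _) (abs_nonneg _)
    have hG0y : (0:ℝ) ≤ ∑ ν ∈ tt, b ν * |haarFn ν y| :=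
      Finset.sum_nonneg fun ν _ => mul_nonneg (norm_nonneg _) (abs_nonneg _)
    have hsq : ‖∑ ν ∈ tt, (a ν * (haarFn ν x:ℂ) - a ν * (haarFn ν y:ℂ))‖^2 ≤
        ((∑ ν ∈ tt, b ν * |haarFn ν x|) + ∑ ν ∈ tt, b ν * |haarFn ν y|)^2 :=
      pow_le_pow_left₀ (norm_nonneg _) hnorm 2
    refine hsq.trans ?_
    have hCSx := pointwise_CS r₁ hr n tt httle b (fun ν => norm_nonneg _) x
    have hCSy := pointwise_CS r₁ hr n tt httle b (fun ν => norm_nonneg _) y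
    have hyx : ∑ ν ∈ tt, (b ν)^2 * (ν:ℝ)^r₁ * (hA ν).indicator 1 y ≤
        ∑ ν ∈ tt, (b ν)^2 * (ν:ℝ)^r₁ * (B ν).indicator 1 x := by
      refine Finset.sum_le_sum fun ν hν => ?_
      have := hk ν hν x hx
      have hc0 : (0:ℝ) ≤ (b ν)^2 * (ν:ℝ)^r₁ := hcc0 ν
      exact mul_le_mul_of_nonneg_left this hc0
    have key : ((∑ ν ∈ tt, b ν * |haarFn ν x|) + ∑ ν ∈ tt, b ν * |haarFn ν y|)^2 ≤
        2 * ((∑ ν ∈ tt, b ν * |haarFn ν x|)^2 + (∑ ν ∈ tt, b ν * |haarFn ν y|)^2) := by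
      nlinarith [sq_nonneg ((∑ ν ∈ tt, b ν * |haarFn ν x|) - ∑ ν ∈ tt, b ν * |haarFn ν y|)]
    refine key.trans ?_
    have hgx : g x =
        2*(K * (∑ ν ∈ tt, (b ν)^2 * (ν:ℝ)^r₁ * (hA ν).indicator 1 x) +
          K * (∑ ν ∈ tt, (b ν)^2 * (ν:ℝ)^r₁ * (B ν).indicator 1 x)) := by
      simp only [hg, Finset.mul_sum, ← Finset.sum_add_distrib]
      exact Finset.sum_congr rfl fun ν _ => by simp only [hcc]; ring
    rw [hgx]
    have h2 : (∑ ν ∈ tt, b ν * |haarFn ν y|)^2 ≤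
        K * ∑ ν ∈ tt, (b ν)^2 * (ν:ℝ)^r₁ * (B ν).indicator 1 x :=
      hCSy.trans (mul_le_mul_of_nonneg_left hyx hK0)
    have h1 : (∑ ν ∈ tt, b ν * |haarFn ν x|)^2 ≤
        K * ∑ ν ∈ tt, (b ν)^2 * (ν:ℝ)^r₁ * (hA ν).indicator 1 x := hCSx
    linarith
  -- integrability of the majorant
  have hint : ∀ ν ∈ tt, MeasureTheory.Integrable
      (fun x => cc ν * ((hA ν).indicator 1 x + (B ν).indicator 1 x))
      (MeasureTheory.volume.restrict (Set.Ico (0:ℝ) 1)) := by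
    intro ν hν
    apply MeasureTheory.Integrable.const_mul
    apply MeasureTheory.Integrable.add
    · exact indicator_Ico_integrable (hc ν) (1/2^(Nat.log 2 ν))
    · exact indicator_Ico_integrable _ _
  have hgint : MeasureTheory.Integrable g
      (MeasureTheory.volume.restrict (Set.Ico (0:ℝ) 1)) := by
    simp only [hg]
    apply MeasureTheory.Integrable.const_mul
    exact MeasureTheory.integrable_finset_sum _ hint
  set S2 : ℝ := ∑ ν ∈ tt, cc ν with hS2
  have hS20 : 0 ≤ S2 := Finset.sum_nonneg fun ν _ => hcc0 ν
  set Sfull : ℝ := ∑ ν ∈ s, ‖a ν‖^2 * max (ν:ℝ) 1 ^ r₁ with hSfull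
  have hSfull0 : 0 ≤ Sfull :=
    Finset.sum_nonneg fun ν _ => mul_nonneg (sq_nonneg _)
      (Real.rpow_nonneg (le_trans (by norm_num) (le_max_right (ν:ℝ) 1)) _)
  have hS2full : S2 ≤ Sfull := by
    rw [hS2, hSfull]
    have : ∑ ν ∈ tt, cc ν = ∑ ν ∈ tt, ‖a ν‖^2 * max (ν:ℝ) 1 ^ r₁ := by
      refine Finset.sum_congr rfl fun ν hν => ?_
      have h1ν : (1:ℝ) ≤ (ν:ℝ) := by
        have := httle ν hν
        have h2 : (1:ℕ) ≤ ν := le_trans (Nat.one_le_two_pow) this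
        exact_mod_cast h2
      rw [hcc, hb, max_eq_left h1ν]
    rw [this]
    refine Finset.sum_le_sum_of_subset_of_nonneg (Finset.filter_subset _ _) ?_
    intro ν _ _
    exact mul_nonneg (sq_nonneg _)
      (Real.rpow_nonneg (le_trans (by norm_num) (le_max_right (ν:ℝ) 1)) _)
  have hgval : ∫ x in Set.Ico (0:ℝ) 1, g x ≤ 2*K*(S2*(2/2^n)) := by
    simp only [hg]
    rw [MeasureTheory.integral_const_mul]
    refine mul_le_mul_of_nonneg_left ?_ (by positivity : (0:ℝ) ≤ 2*K)
    rw [MeasureTheory.integral_finset_sum _ hint]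
    rw [hS2, Finset.sum_mul]
    refine Finset.sum_le_sum fun ν hν => ?_
    rw [MeasureTheory.integral_const_mul]
    refine mul_le_mul_of_nonneg_left ?_ (hcc0 ν)
    have hAint : MeasureTheory.Integrable (fun x => (hA ν).indicator (1:ℝ→ℝ) x)
        (MeasureTheory.volume.restrict (Set.Ico (0:ℝ) 1)) :=
      indicator_Ico_integrable (hc ν) (1/2^(Nat.log 2 ν))
    have hBint : MeasureTheory.Integrable (fun x => (B ν).indicator (1:ℝ→ℝ) x)
        (MeasureTheory.volume.restrict (Set.Ico (0:ℝ) 1)) :=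
      indicator_Ico_integrable _ _
    rw [MeasureTheory.integral_add hAint hBint]
    have hwle : (1:ℝ)/2^(Nat.log 2 ν) ≤ 1/2^n := by
      apply one_div_le_one_div_of_le (by positivity)
      exact_mod_cast Nat.pow_le_pow_right (by norm_num) (hlev ν hν)
    have hA_le : ∫ x in Set.Ico (0:ℝ) 1, (hA ν).indicator (1:ℝ→ℝ) x ≤ 1/2^n :=
      (integral_indicator_Ico_le (hc ν) (1/2^(Nat.log 2 ν)) (by positivity)).trans hwle
    have hB_le : ∫ x in Set.Ico (0:ℝ) 1, (B ν).indicator (1:ℝ→ℝ) x ≤ 1/2^n :=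
      integral_indicator_Ico_le ((k ν:ℝ)/2^n) ((1:ℝ)/2^n) (by positivity)
    calc (∫ x in Set.Ico (0:ℝ) 1, (hA ν).indicator (1:ℝ→ℝ) x) +
          ∫ x in Set.Ico (0:ℝ) 1, (B ν).indicator (1:ℝ→ℝ) x
        ≤ 1/2^n + 1/2^n := add_le_add hA_le hB_le
      _ = 2/2^n := by ring
  -- arithmetic
  have hqnr : q^n/((2:ℝ)^n) = (2:ℝ)^(-(n:ℝ)*r₁) := by
    rw [hq, ← Real.rpow_natCast ((2:ℝ)^((1:ℝ)-r₁)) n, ← Real.rpow_natCast (2:ℝ) n,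
      ← Real.rpow_mul (by norm_num), ← Real.rpow_sub (by norm_num)]
    congr 1; ring
  have e1 : (C * (2:ℝ)^(-(n:ℝ)*r₁/2) * Real.sqrt Sfull)^2 =
      C^2 * (2:ℝ)^(-(n:ℝ)*r₁) * Sfull := by
    rw [mul_pow, mul_pow, Real.sq_sqrt hSfull0,
      ← Real.rpow_natCast ((2:ℝ)^(-(n:ℝ)*r₁/2)) 2, ← Real.rpow_mul (by norm_num)]
    norm_num
  have e2 : C^2 = 4/(1-q) := by
    rw [hC, div_pow, Real.sq_sqrt h1q.le]
    norm_num
  have harith : 2*K*(S2*(2/2^n)) ≤ (C * (2:ℝ)^(-(n:ℝ)*r₁/2) * Real.sqrt Sfull)^2 := by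
    rw [e1, e2]
    have lhs_eq : 2*K*(S2*(2/2^n)) = 4/(1-q) * (q^n/((2:ℝ)^n)) * S2 := by
      rw [hK]; field_simp; ring
    rw [lhs_eq, hqnr]
    refine mul_le_mul_of_nonneg_left hS2full ?_
    have h2p : (0:ℝ) ≤ (2:ℝ)^(-(n:ℝ)*r₁) := Real.rpow_nonneg (by norm_num) _
    positivity
  -- final chain
  have hmono : (∫ x in Set.Ico (0:ℝ) 1,
      ‖(∑ ν ∈ s, a ν * (haarFn ν x : ℂ)) -
        midInterp n (fun t => ∑ ν ∈ s, a ν * (haarFn ν t : ℂ)) x‖ ^ 2) ≤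
      ∫ x in Set.Ico (0:ℝ) 1, g x := by
    refine MeasureTheory.integral_mono_of_nonneg ?_ hgint ?_
    · exact Filter.Eventually.of_forall fun x => by positivity
    · exact (MeasureTheory.ae_restrict_iff' measurableSet_Ico).mpr
        (Filter.Eventually.of_forall claim1)
  have hfinal : (∫ x in Set.Icc (0:ℝ) 1,
      ‖(∑ ν ∈ s, a ν * (haarFn ν x : ℂ)) -
        midInterp n (fun t => ∑ ν ∈ s, a ν * (haarFn ν t : ℂ)) x‖ ^ 2) ≤
      (C * (2:ℝ)^(-(n:ℝ)*r₁/2) * Real.sqrt Sfull)^2 := by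
    rw [MeasureTheory.integral_Icc_eq_integral_Ico]
    exact hmono.trans (hgval.trans harith)
  have hR0 : 0 ≤ C * (2:ℝ)^(-(n:ℝ)*r₁/2) * Real.sqrt Sfull := by positivity
  calc Real.sqrt (∫ x in Set.Icc (0:ℝ) 1,
        ‖(∑ ν ∈ s, a ν * (haarFn ν x : ℂ)) -
          midInterp n (fun t => ∑ ν ∈ s, a ν * (haarFn ν t : ℂ)) x‖ ^ 2)
      ≤ Real.sqrt ((C * (2:ℝ)^(-(n:ℝ)*r₁/2) * Real.sqrt Sfull)^2) :=
        Real.sqrt_le_sqrt hfinal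
    _ = C * (2:ℝ)^(-(n:ℝ)*r₁/2) * Real.sqrt Sfull := Real.sqrt_sq hR0
end
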